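/- Fix an integer L ≥ 1, an index k ∈ {1,…,L}, real channel gains h_{jk} for j = 1,…,L, powers P_j ≥ 0, noise level N₀ > 0, and C > 0. Define q' = (N₀ + Σ_{j=1}^{L} h_{jk}²P_j)/(2^{2C} − 1) and S' = h_{kk}²P_k/(N₀ + Σ_{j>k} h_{jk}²P_j + 2^{−2C}·Σ_{j<k} h_{jk}²P_j). Then (1/2)·log₂[(q' + N₀ + Σ_{j≥k} h_{jk}²P_j)/(q' + N₀ + Σ_{j>k} h_{jk}²P_j)] = (1/2)·log₂[(1 + S')/(1 + 2^{−2C}·S')]. (This is the simplified rate expression of the per-base-station SIC scheme without Wyner-Ziv coding, Theorem 2 of the paper.) -/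

import Mathlib

/-- Theorem 2 of the paper: simplified rate expression of the per-base-station SIC
scheme without Wyner-Ziv coding. Here `h j` is the channel gain `h_{jk}` from user `j`
to base-station `k`, `P j` is the power of user `j`, `N0` the noise level, and `C` the
backhaul capacity of base-station `k`. -/
theorem per_base_station_SIC_no_WZ_rate (L : ℕ) (hL : 1 ≤ L) (k : ℕ)
    (hk : k ∈ Finset.Icc 1 L) (h P : ℕ → ℝ) (hP : ∀ j, 0 ≤ P j)
    (N0 : ℝ) (hN0 : 0 < N0) (C : ℝ) (hC : 0 < C) :
    let q' := (N0 + ∑ j ∈ Finset.Icc 1 L, (h j) ^ 2 * P j) / ((2 : ℝ) ^ (2 * C) - 1)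
    let S' := (h k) ^ 2 * P k /
      (N0 + (∑ j ∈ Finset.Ioc k L, (h j) ^ 2 * P j)
        + (2 : ℝ) ^ (-(2 * C)) * ∑ j ∈ Finset.Ico 1 k, (h j) ^ 2 * P j)
    (1 / 2) * Real.logb 2
        ((q' + N0 + ∑ j ∈ Finset.Icc k L, (h j) ^ 2 * P j) /
          (q' + N0 + ∑ j ∈ Finset.Ioc k L, (h j) ^ 2 * P j))
      = (1 / 2) * Real.logb 2 ((1 + S') / (1 + (2 : ℝ) ^ (-(2 * C)) * S')) := by
  intro q' S'
  obtain ⟨hk1, hkL⟩ := Finset.mem_Icc.mp hk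
  set f : ℕ → ℝ := fun j => (h j) ^ 2 * P j with hf
  set t : ℝ := (2 : ℝ) ^ (2 * C) with ht
  have ht1 : (1 : ℝ) < t :=
    (Real.one_lt_rpow_iff_of_pos two_pos).mpr (Or.inl ⟨one_lt_two, by positivity⟩)
  have hneg : (2 : ℝ) ^ (-(2 * C)) = t⁻¹ := Real.rpow_neg (by norm_num) _
  set B : ℝ := ∑ j ∈ Finset.Ico 1 k, f j with hB
  set T : ℝ := ∑ j ∈ Finset.Ioc k L, f j with hT
  have hfnn : ∀ j, 0 ≤ f j := fun j => mul_nonneg (sq_nonneg _) (hP j)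
  have hsplit2 : ∑ j ∈ Finset.Icc k L, f j = f k + T := by
    rw [hT, ← Finset.Icc_add_one_left_eq_Ioc, ← Finset.Ico_add_one_right_eq_Icc, ← Finset.Ico_add_one_right_eq_Icc,
      Finset.sum_eq_sum_Ico_succ_bot (by omega)]
  have hsplit1 : ∑ j ∈ Finset.Icc 1 L, f j = B + (f k + T) := by
    rw [← hsplit2, hB,
      show Finset.Icc 1 L = Finset.Ico 1 (L + 1) from (Finset.Ico_add_one_right_eq_Icc 1 L).symm,
      show Finset.Icc k L = Finset.Ico k (L + 1) from (Finset.Ico_add_one_right_eq_Icc k L).symm,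
      Finset.sum_Ico_consecutive _ hk1 (by omega : k ≤ L + 1)]
  have hBnn : 0 ≤ B := Finset.sum_nonneg fun j _ => hfnn j
  have hTnn : 0 ≤ T := Finset.sum_nonneg fun j _ => hfnn j
  have hsnn : 0 ≤ f k := hfnn k
  have htpos : (0 : ℝ) < t := lt_trans one_pos ht1
  have htne : t - 1 ≠ 0 := ne_of_gt (by linarith)
  have hDpos : 0 < N0 + T + t⁻¹ * B := by positivity
  have hDne : N0 + T + t⁻¹ * B ≠ 0 := ne_of_gt hDpos
  congr 1
  congr 1
  show (q' + N0 + ∑ j ∈ Finset.Icc k L, f j) / (q' + N0 + T)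
      = (1 + S') / (1 + (2 : ℝ) ^ (-(2 * C)) * S')
  have hq' : q' = (N0 + (B + (f k + T))) / (t - 1) := by
    simp only [q', hsplit1]
    exact congrArg (fun x => (N0 + x) / (t - 1)) hsplit1
  have hS' : S' = f k / (N0 + T + t⁻¹ * B) := by
    simp only [S', hneg]
    rfl
  rw [hq', hS', hsplit2, hneg]
  have hq'nn : 0 ≤ (N0 + (B + (f k + T))) / (t - 1) :=
    div_nonneg (by linarith) (by linarith)
  have hden1 : (N0 + (B + (f k + T))) / (t - 1) + N0 + T ≠ 0 := by
    have := hq'nn; positivity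
  have hden2 : 1 + t⁻¹ * (f k / (N0 + T + t⁻¹ * B)) ≠ 0 := by
    have h0 : 0 ≤ t⁻¹ * (f k / (N0 + T + t⁻¹ * B)) := by positivity
    linarith
  have htne' : t ≠ 0 := ne_of_gt htpos
  have hq'e : (N0 + (B + (f k + T))) / (t - 1) + N0 + (f k + T)
      = t * ((N0 + T + t⁻¹ * B) + f k) / (t - 1) := by
    field_simp
    ring
  have hq'e2 : (N0 + (B + (f k + T))) / (t - 1) + N0 + T
      = (t * (N0 + T + t⁻¹ * B) + f k) / (t - 1) := by
    field_simp
    ring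
  have hS1 : 1 + f k / (N0 + T + t⁻¹ * B)
      = ((N0 + T + t⁻¹ * B) + f k) / (N0 + T + t⁻¹ * B) := by
    field_simp
  have hS2 : 1 + t⁻¹ * (f k / (N0 + T + t⁻¹ * B))
      = (t * (N0 + T + t⁻¹ * B) + f k) / (t * (N0 + T + t⁻¹ * B)) := by
    field_simp
  rw [hq'e, hq'e2, hS1, hS2]
  have hnumpos : 0 < t * (N0 + T + t⁻¹ * B) + f k := by positivity
  have hnum : t * (N0 + T + t⁻¹ * B) + f k ≠ 0 := ne_of_gt hnumpos
  rw [div_div_div_comm, div_self htne, div_div_div_comm, div_one]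
  field_simp
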